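/- Let R be a commutative ring, S a multiplicative subset of R, and A, B R-modules. If A ⊕ B is u-S-pseudo-projective, then every u-S-epimorphism f : A → B u-S-splits; that is, there exist s ∈ S and an R-homomorphism g : B → A such that f ∘ g = s·1_B. -/
import Mathlib


/-!  Definitions for uniformly-S-pseudo-projective modules
(M. Adarbeh, M. Saleh, "Uniformly-S-pseudo-projective modules"). -/

universe u v w

/-- `S` is a multiplicative subset of the commutative ring `R`:
`1 ∈ S`, `0 ∉ S`, and `S` is closed under multiplication. -/
def IsMultSubset {R : Type u} [CommRing R] (S : Set R) : Prop :=
  1 ∈ S ∧ (0 : R) ∉ S ∧ ∀ ⦃a b : R⦄, a ∈ S → b ∈ S → a * b ∈ S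

/-- An `R`-module `T` is `u`-`S`-torsion if some `s ∈ S` annihilates it. -/
def IsUSTorsion {R : Type u} [CommRing R] (S : Set R) (T : Type v) [AddCommGroup T]
    [Module R T] : Prop :=
  ∃ s ∈ S, ∀ t : T, s • t = 0

/-- `f` is a `u`-`S`-monomorphism: its kernel is `u`-`S`-torsion. -/
def IsUSMono {R : Type u} [CommRing R] (S : Set R) {M : Type v} {N : Type w}
    [AddCommGroup M] [Module R M] [AddCommGroup N] [Module R N] (f : M →ₗ[R] N) : Prop :=
  ∃ s ∈ S, ∀ m ∈ LinearMap.ker f, s • m = (0 : M)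

/-- `f` is a `u`-`S`-epimorphism: its cokernel is `u`-`S`-torsion. -/
def IsUSEpi {R : Type u} [CommRing R] (S : Set R) {M : Type v} {N : Type w}
    [AddCommGroup M] [Module R M] [AddCommGroup N] [Module R N] (f : M →ₗ[R] N) : Prop :=
  ∃ s ∈ S, ∀ n : N, s • n ∈ LinearMap.range f

/-- `f` is a `u`-`S`-isomorphism: both a `u`-`S`-monomorphism and a `u`-`S`-epimorphism. -/
def IsUSIso {R : Type u} [CommRing R] (S : Set R) {M : Type v} {N : Type w}
    [AddCommGroup M] [Module R M] [AddCommGroup N] [Module R N] (f : M →ₗ[R] N) : Prop :=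
  IsUSMono S f ∧ IsUSEpi S f

/-- `P` is `u`-`S`-pseudo-projective: for every submodule `K` of `P` there is `s ∈ S` such that
every `u`-`S`-epimorphism `f : P → P/K` satisfies `s • f = π_K ∘ g` for some endomorphism
`g` of `P`. -/
def IsUSPseudoProjective {R : Type u} [CommRing R] (S : Set R) (P : Type v)
    [AddCommGroup P] [Module R P] : Prop :=
  ∀ K : Submodule R P, ∃ s ∈ S, ∀ f : P →ₗ[R] P ⧸ K, IsUSEpi S f →
    ∃ g : P →ₗ[R] P, s • f = K.mkQ.comp g

/-- `M` is `u`-`S`-quasi-projective. -/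
def IsUSQuasiProjective {R : Type u} [CommRing R] (S : Set R) (M : Type v)
    [AddCommGroup M] [Module R M] : Prop :=
  ∀ K : Submodule R M, ∃ s ∈ S, ∀ f : M →ₗ[R] M ⧸ K,
    ∃ g : M →ₗ[R] M, s • f = K.mkQ.comp g

/-- `Q` is `u`-`S`-projective (test modules in `Type v₁`). -/
def IsUSProjective.{u₁, v₁, w₁} {R : Type u₁} [CommRing R] (S : Set R) (Q : Type w₁)
    [AddCommGroup Q] [Module R Q] : Prop :=
  ∀ (B C : Type v₁) [AddCommGroup B] [AddCommGroup C] [Module R B] [Module R C]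
    (g : B →ₗ[R] C), IsUSEpi S g →
      ∃ s ∈ S, ∀ h : Q →ₗ[R] C, ∃ h' : Q →ₗ[R] B, s • h = g.comp h'

/-- `M` is `u`-`S`-injective (test modules in `Type v₁`). -/
def IsUSInjective.{u₁, v₁, w₁} {R : Type u₁} [CommRing R] (S : Set R) (M : Type w₁)
    [AddCommGroup M] [Module R M] : Prop :=
  ∀ (A B : Type v₁) [AddCommGroup A] [AddCommGroup B] [Module R A] [Module R B]
    (f : A →ₗ[R] B), IsUSMono S f →
      ∃ s ∈ S, ∀ h : A →ₗ[R] M, ∃ h' : B →ₗ[R] M, s • h = h'.comp f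

/-- `E` is `u`-`S`-pseudo-injective. -/
def IsUSPseudoInjective {R : Type u} [CommRing R] (S : Set R) (E : Type v)
    [AddCommGroup E] [Module R E] : Prop :=
  ∀ K : Submodule R E, ∃ s ∈ S, ∀ f : ↥K →ₗ[R] E, IsUSMono S f →
    ∃ g : E →ₗ[R] E, g.comp K.subtype = s • f

/-- The sequence `0 → A →f B →g C → 0` is short `u`-`S`-exact. -/
def IsShortUSExact {R : Type u} [CommRing R] (S : Set R) {A B C : Type v}
    [AddCommGroup A] [Module R A] [AddCommGroup B] [Module R B] [AddCommGroup C] [Module R C]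
    (f : A →ₗ[R] B) (g : B →ₗ[R] C) : Prop :=
  IsUSMono S f ∧ IsUSEpi S g ∧
    ∃ s ∈ S, (∀ x ∈ LinearMap.ker g, s • x ∈ LinearMap.range f) ∧
      (∀ x ∈ LinearMap.range f, s • x ∈ LinearMap.ker g)

/-- The short `u`-`S`-exact sequence `0 → A →f B →g C → 0` is `u`-`S`-split:
some multiple `s • 1_A` of the identity factors back through `f`. -/
def IsUSSplitSeq {R : Type u} [CommRing R] (S : Set R) {A B : Type v}
    [AddCommGroup A] [Module R A] [AddCommGroup B] [Module R B] (f : A →ₗ[R] B) : Prop :=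
  ∃ s ∈ S, ∃ f' : B →ₗ[R] A, f'.comp f = s • (LinearMap.id : A →ₗ[R] A)

/-- `M` is a `u`-`S`-semisimple module (test sequences with modules in `Type v₁`). -/
def IsUSSemisimpleModule.{u₁, v₁} {R : Type u₁} [CommRing R] (S : Set R) (M : Type v₁)
    [AddCommGroup M] [Module R M] : Prop :=
  ∀ (A C : Type v₁) [AddCommGroup A] [AddCommGroup C] [Module R A] [Module R C]
    (f : A →ₗ[R] M) (g : M →ₗ[R] C), IsShortUSExact S f g → IsUSSplitSeq S f

/-- `R` is a `u`-`S`-semisimple ring: every free `R`-module is `u`-`S`-semisimple. -/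
def IsUSSemisimpleRing.{u₁, v₁} {R : Type u₁} [CommRing R] (S : Set R) : Prop :=
  ∀ (F : Type v₁) [AddCommGroup F] [Module R F], Module.Free R F →
    IsUSSemisimpleModule.{u₁, v₁} S F

/-- A submodule `N` of `M` is a `u`-`S`-direct summand of `M` if there is an `R`-module `N'`
and a `u`-`S`-isomorphism between `M` and `N ⊕ N'`. -/
def IsUSDirectSummand {R : Type u} [CommRing R] (S : Set R) {M : Type v}
    [AddCommGroup M] [Module R M] (N : Submodule R M) : Prop :=
  ∃ (N' : ModuleCat.{v} R) (h : M →ₗ[R] (↥N × ↥N')), IsUSIso S h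

/-- `A` is `u`-`S`-projective relative to `B`. -/
def IsUSProjectiveRel {R : Type u} [CommRing R] (S : Set R) (A : Type v) (B : Type w)
    [AddCommGroup A] [Module R A] [AddCommGroup B] [Module R B] : Prop :=
  ∀ K : Submodule R B, ∃ s ∈ S, ∀ f : A →ₗ[R] B ⧸ K,
    ∃ h : A →ₗ[R] B, s • f = K.mkQ.comp h

/-- If `A ⊕ B` is `u`-`S`-pseudo-projective, then every `u`-`S`-epimorphism `f : A → B`
`u`-`S`-splits: there are `s ∈ S` and `g : B → A` with `f ∘ g = s • 1_B`. -/
theorem uSEpi_uSSplits_of_prod_uSPseudoProjective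
    {R : Type u} [CommRing R] (S : Set R) (hS : IsMultSubset S)
    {A B : Type v} [AddCommGroup A] [Module R A] [AddCommGroup B] [Module R B]
    (hAB : IsUSPseudoProjective S (A × B)) (f : A →ₗ[R] B) (hf : IsUSEpi S f) :
    ∃ s ∈ S, ∃ g : B →ₗ[R] A, f.comp g = s • (LinearMap.id : B →ₗ[R] B) := by
  classical
  obtain ⟨s₀, hs₀, hs₀r⟩ := hf
  set e := f.quotKerEquivRange with he
  -- θ sends b to the unique class x in A ⧸ ker f with f̄ x = s₀ • b
  set θ : B →ₗ[R] A ⧸ LinearMap.ker f :=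
    e.symm.toLinearMap ∘ₗ LinearMap.codRestrict (LinearMap.range f)
      (s₀ • (LinearMap.id : B →ₗ[R] B)) (fun b => hs₀r b) with hθdef
  have hθ : ∀ a : A, θ (f a) = s₀ • Submodule.Quotient.mk a := by
    intro a
    apply e.injective
    rw [hθdef]
    simp only [LinearMap.comp_apply, LinearEquiv.coe_coe, LinearEquiv.apply_symm_apply,
      map_smul, he]
    apply Subtype.ext
    simp [LinearMap.quotKerEquivRange_apply_mk, LinearMap.codRestrict_apply]
  have hθ' : ∀ (b : B) (a : A), θ b = Submodule.Quotient.mk a → f a = s₀ • b := by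
    intro b a ha
    have h1 : e (θ b) = ⟨s₀ • b, hs₀r b⟩ := by
      rw [hθdef]
      simp only [LinearMap.comp_apply, LinearEquiv.coe_coe, LinearEquiv.apply_symm_apply]
      rfl
    rw [ha, he] at h1
    have h2 := congrArg Subtype.val h1
    rwa [f.quotKerEquivRange_apply_mk] at h2
  set K : Submodule R (A × B) := (LinearMap.ker f).prod ⊤ with hK
  have hmemK : ∀ x : A × B, x ∈ K ↔ f x.1 = 0 := by
    intro x
    rw [hK, Submodule.mem_prod]
    simp [LinearMap.mem_ker]
  -- ι : A ⧸ ker f → (A × B) ⧸ K induced by a ↦ (a, 0)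
  set ι : (A ⧸ LinearMap.ker f) →ₗ[R] (A × B) ⧸ K :=
    (LinearMap.ker f).liftQ (K.mkQ ∘ₗ LinearMap.inl R A B) (by
      intro a ha
      simp only [LinearMap.mem_ker, LinearMap.comp_apply, LinearMap.inl_apply,
        Submodule.mkQ_apply, Submodule.Quotient.mk_eq_zero]
      exact (hmemK (a, 0)).2 ha) with hι
  have hιmk : ∀ a : A, ι (Submodule.Quotient.mk a) = Submodule.Quotient.mk (a, 0) := by
    intro a
    rw [hι]
    simp [Submodule.liftQ_apply]
  set F : (A × B) →ₗ[R] (A × B) ⧸ K := ι ∘ₗ θ ∘ₗ LinearMap.snd R A B with hF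
  have hFapp : ∀ x : A × B, F x = ι (θ x.2) := fun x => rfl
  have hFepi : IsUSEpi S F := by
    refine ⟨s₀, hs₀, ?_⟩
    intro x
    obtain ⟨⟨a, b⟩, rfl⟩ := Submodule.Quotient.mk_surjective K x
    refine ⟨(0, f a), ?_⟩
    rw [hFapp, hθ a, map_smul, hιmk]
    rw [← sub_eq_zero, ← smul_sub, ← Submodule.Quotient.mk_sub, ← Submodule.Quotient.mk_smul,
      Submodule.Quotient.mk_eq_zero]
    exact (hmemK _).2 (by simp)
  obtain ⟨s₁, hs₁, hP⟩ := hAB K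
  obtain ⟨g, hg⟩ := hP F hFepi
  refine ⟨s₀ * s₁, hS.2.2 hs₀ hs₁,
    (LinearMap.fst R A B) ∘ₗ g ∘ₗ (LinearMap.inr R A B), ?_⟩
  ext b
  simp only [LinearMap.comp_apply, LinearMap.inr_apply, LinearMap.fst_apply,
    LinearMap.smul_apply, LinearMap.id_apply]
  obtain ⟨a, ha⟩ := Submodule.Quotient.mk_surjective (LinearMap.ker f) (θ b)
  have hfa : f a = s₀ • b := hθ' b a ha.symm
  have h1 : (s₁ • F) (0, b) = K.mkQ (g (0, b)) := by rw [hg]; rfl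
  have h2 : K.mkQ (g (0, b)) = Submodule.Quotient.mk (s₁ • a, (0 : B)) := by
    rw [← h1, LinearMap.smul_apply, hFapp, ← ha, hιmk, ← Submodule.Quotient.mk_smul]
    simp [Prod.smul_def]
  rw [Submodule.mkQ_apply, Submodule.Quotient.eq] at h2
  have h3 : f ((g (0, b)).1 - s₁ • a) = 0 := (hmemK _).1 h2
  have h4 : f ((g (0, b)).1) = s₁ • f a := by
    rw [map_sub, map_smul, sub_eq_zero] at h3
    exact h3
  rw [h4, hfa, smul_smul, mul_comm s₁ s₀]
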